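/- Let (γ, ℓ, ℓ⁽²⁾) be metric hypersurface data on a finite-dimensional real vector space V. Then there exists a unique triple (P, n, n⁽²⁾), with P a symmetric bilinear form on the dual space V*, n ∈ V and n⁽²⁾ ∈ ℝ, which is contravariant data for (γ, ℓ, ℓ⁽²⁾), i.e. satisfying: γ(n,v) + n⁽²⁾·ℓ(v) = 0 for all v ∈ V; ℓ(n) + n⁽²⁾·ℓ⁽²⁾ = 1; P(α, ℓ) + ℓ⁽²⁾·α(n) = 0 for all α ∈ V*; and P(α, γ(v,·)) + α(n)·ℓ(v) = α(v) for all α ∈ V* and v ∈ V. -/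

import Mathlib

/-- Given metric hypersurface data `(γ, ℓ, ℓ2)` on a finite-dimensional real
vector space `V` (i.e. `γ` is a symmetric bilinear form, `ℓ` a linear functional, `ℓ2` a scalar,
and the extended symmetric bilinear form `𝒜` on `V × ℝ` is nondegenerate), there exists a unique
triple `(P, n, n2)`, with `P` a symmetric bilinear form on the dual space, `n ∈ V` and `n2 ∈ ℝ`,
which is contravariant data for `(γ, ℓ, ℓ2)`. -/
theorem stmt_0 {V : Type*} [AddCommGroup V] [Module ℝ V] [FiniteDimensional ℝ V]
    (γ : V →ₗ[ℝ] V →ₗ[ℝ] ℝ) (ℓ : Module.Dual ℝ V) (ℓ2 : ℝ)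
    (hγsymm : ∀ x y : V, γ x y = γ y x)
    (hnondeg : ∀ (W : V) (a : ℝ),
      (∀ (Z : V) (b : ℝ), γ W Z + a * ℓ Z + b * ℓ W + a * b * ℓ2 = 0) → W = 0 ∧ a = 0) :
    ∃! Pn : (Module.Dual ℝ V →ₗ[ℝ] Module.Dual ℝ V →ₗ[ℝ] ℝ) × V × ℝ,
      (∀ α β : Module.Dual ℝ V, Pn.1 α β = Pn.1 β α) ∧
      (∀ v : V, γ Pn.2.1 v + Pn.2.2 * ℓ v = 0) ∧
      (ℓ Pn.2.1 + Pn.2.2 * ℓ2 = 1) ∧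
      (∀ α : Module.Dual ℝ V, Pn.1 α ℓ + ℓ2 * α Pn.2.1 = 0) ∧
      (∀ (α : Module.Dual ℝ V) (v : V), Pn.1 α (γ v) + α Pn.2.1 * ℓ v = α v) := by
  classical
  -- the extended bilinear form on V × ℝ
  set A : LinearMap.BilinForm ℝ (V × ℝ) :=
    LinearMap.mk₂ ℝ
      (fun p q => γ p.1 q.1 + p.2 * ℓ q.1 + q.2 * ℓ p.1 + p.2 * q.2 * ℓ2)
      (by intro p p' q
          simp only [Prod.fst_add, Prod.snd_add, map_add, LinearMap.add_apply]; ring)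
      (by intro c p q
          simp only [Prod.smul_fst, Prod.smul_snd, map_smul, LinearMap.smul_apply,
            smul_eq_mul]; ring)
      (by intro p q q'
          simp only [Prod.fst_add, Prod.snd_add, map_add, LinearMap.add_apply]; ring)
      (by intro c p q
          simp only [Prod.smul_fst, Prod.smul_snd, map_smul, LinearMap.smul_apply,
            smul_eq_mul]; ring) with hAdef
  have hAapp : ∀ p q : V × ℝ,
      A p q = γ p.1 q.1 + p.2 * ℓ q.1 + q.2 * ℓ p.1 + p.2 * q.2 * ℓ2 := by
    intro p q; simp [hAdef]
  have hAnd : A.Nondegenerate := by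
    refine ⟨fun p hp => ?_, fun p hp => ?_⟩
    · obtain ⟨h1, h2⟩ := hnondeg p.1 p.2 (fun Z b => by
        have := hp (Z, b); rw [hAapp] at this; linarith)
      exact Prod.ext h1 h2
    · obtain ⟨h1, h2⟩ := hnondeg p.1 p.2 (fun Z b => by
        have := hp (Z, b); rw [hAapp] at this
        linear_combination this + hγsymm p.1 Z)
      exact Prod.ext h1 h2
  set Φ : (V × ℝ) ≃ₗ[ℝ] Module.Dual ℝ (V × ℝ) := A.toDual hAnd with hΦdef
  have key : ∀ (f : Module.Dual ℝ (V × ℝ)) (q : V × ℝ), A (Φ.symm f) q = f q := by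
    intro f q
    have h : Φ (Φ.symm f) = f := Φ.apply_symm_apply f
    calc A (Φ.symm f) q = Φ (Φ.symm f) q := (LinearMap.BilinForm.toDual_def hAnd).symm
      _ = f q := by rw [h]
  -- the normal vector
  set n : V × ℝ := Φ.symm (LinearMap.snd ℝ V ℝ) with hndef
  have hn1 : ∀ Z : V, γ n.1 Z + n.2 * ℓ Z = 0 := by
    intro Z
    have := key (LinearMap.snd ℝ V ℝ) (Z, 0)
    rw [hAapp] at this; simpa using this
  have hn2 : ℓ n.1 + n.2 * ℓ2 = 1 := by
    have := key (LinearMap.snd ℝ V ℝ) ((0 : V), 1)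
    rw [hAapp] at this; simpa using this
  -- the "lift" of a covector
  set w : Module.Dual ℝ V →ₗ[ℝ] V × ℝ :=
    Φ.symm.toLinearMap ∘ₗ (LinearMap.fst ℝ V ℝ).dualMap with hwdef
  have hw : ∀ (α : Module.Dual ℝ V) (Z : V) (b : ℝ),
      γ (w α).1 Z + (w α).2 * ℓ Z + b * ℓ (w α).1 + (w α).2 * b * ℓ2 = α Z := by
    intro α Z b
    have := key ((LinearMap.fst ℝ V ℝ).dualMap α) (Z, b)
    rw [hAapp] at this
    simpa [hwdef] using this
  have hw0 : ∀ (α : Module.Dual ℝ V) (Z : V), γ (w α).1 Z + (w α).2 * ℓ Z = α Z := by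
    intro α Z; have := hw α Z 0; simpa using this
  have hwl : ∀ α : Module.Dual ℝ V, ℓ (w α).1 + (w α).2 * ℓ2 = 0 := by
    intro α; have := hw α 0 1; simpa using this
  -- α applied to the normal
  have han : ∀ α : Module.Dual ℝ V, α n.1 = (w α).2 := by
    intro α
    have h1 := hw0 α n.1
    have h2 := hn1 (w α).1
    have h3 := hwl α
    have hγ := hγsymm (w α).1 n.1
    linear_combination -h1 + hγ + h2 + (w α).2 * hn2 - n.2 * h3
  -- the contravariant bilinear form
  set P : Module.Dual ℝ V →ₗ[ℝ] Module.Dual ℝ V →ₗ[ℝ] ℝ :=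
    LinearMap.mk₂ ℝ (fun α β => β (w α).1)
      (by intro α α' β; simp [Prod.fst_add])
      (by intro c α β; simp [Prod.smul_fst])
      (by intro α β β'; simp)
      (by intro c α β; simp) with hPdef
  have hPapp : ∀ α β : Module.Dual ℝ V, P α β = β (w α).1 := by
    intro α β; simp [hPdef]
  have hPsymm : ∀ α β : Module.Dual ℝ V, P α β = P β α := by
    intro α β
    rw [hPapp, hPapp]
    linear_combination -(hw0 β (w α).1) + hw0 α (w β).1 + hγsymm (w β).1 (w α).1 +
      (w β).2 * hwl α - (w α).2 * hwl β
  have hP4 : ∀ α : Module.Dual ℝ V, P α ℓ + ℓ2 * α n.1 = 0 := by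
    intro α
    rw [hPapp, han α]
    linear_combination hwl α
  have hP5 : ∀ (α : Module.Dual ℝ V) (v : V), P α (γ v) + α n.1 * ℓ v = α v := by
    intro α v
    rw [hPapp, han α]
    linear_combination hγsymm v (w α).1 + hw0 α v
  refine ⟨⟨P, n.1, n.2⟩, ⟨hPsymm, hn1, hn2, hP4, hP5⟩, ?_⟩
  rintro ⟨Q, m, m2⟩ ⟨hQs, hc2, hc3, hc4, hc5⟩
  -- uniqueness of the normal
  have hΦm : Φ (m, m2) = LinearMap.snd ℝ V ℝ := by
    apply LinearMap.ext
    intro q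
    have h : Φ (m, m2) q = A (m, m2) q := LinearMap.BilinForm.toDual_def hAnd
    rw [h, hAapp]
    have := hc2 q.1
    simp only [LinearMap.snd_apply]
    linear_combination this + q.2 * hc3
  have hmn : (m, m2) = n := by
    rw [hndef, ← hΦm, Φ.symm_apply_apply]
  have hm1 : m = n.1 := by rw [← hmn]
  have hm2 : m2 = n.2 := by rw [← hmn]
  -- every covector decomposes through w
  have hβdec : ∀ β : Module.Dual ℝ V, β = γ (w β).1 + (w β).2 • ℓ := by
    intro β
    apply LinearMap.ext
    intro Z
    simp only [LinearMap.add_apply, LinearMap.smul_apply, smul_eq_mul]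
    linear_combination -(hw0 β Z)
  -- any triple satisfying the conditions has forced values
  have hforced : ∀ (R : Module.Dual ℝ V →ₗ[ℝ] Module.Dual ℝ V →ₗ[ℝ] ℝ) (u : V),
      (∀ α : Module.Dual ℝ V, R α ℓ + ℓ2 * α u = 0) →
      (∀ (α : Module.Dual ℝ V) (v : V), R α (γ v) + α u * ℓ v = α v) →
      ∀ α β : Module.Dual ℝ V,
        R α β = α (w β).1 - α u * ℓ (w β).1 - (w β).2 * (ℓ2 * α u) := by
    intro R u h4 h5 α β
    conv_lhs => rw [hβdec β]
    simp only [map_add, map_smul, smul_eq_mul]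
    linear_combination h5 α (w β).1 + (w β).2 * h4 α
  have hQP : Q = P := by
    apply LinearMap.ext; intro α; apply LinearMap.ext; intro β
    rw [hforced Q m hc4 hc5 α β, hforced P n.1 hP4 hP5 α β, hm1]
  rw [Prod.ext_iff, Prod.ext_iff]
  exact ⟨hQP, hm1, hm2⟩
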